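/- Let $U:(0,\infty)\to\mathbb{R}$ be continuous and strictly increasing, let $\beta\ge 0$ and $\delta>0$, and let $Y$ be a strictly positive real random variable with $\mathbb{E}[|U(Y)|]<\infty$. Then there exists a unique $\eta\in(0,\infty)$ such that $U(\eta)=\mathbb{E}[U(Y)]-\beta\,\mathbb{E}[(U(\delta\eta)-U(Y))_+]$, where $x_+=\max\{x,0\}$. -/

import Mathlib

open MeasureTheory

theorem gda_value_exists_unique
    {Ω : Type*} [MeasurableSpace Ω] (μ : Measure Ω) [IsProbabilityMeasure μ]
    (U : ℝ → ℝ) (hUc : ContinuousOn U (Set.Ioi 0)) (hUm : StrictMonoOn U (Set.Ioi 0))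
    (β δ : ℝ) (hβ : 0 ≤ β) (hδ : 0 < δ)
    (Y : Ω → ℝ) (hYmeas : Measurable Y) (hYpos : ∀ ω, 0 < Y ω)
    (hInt : Integrable (fun ω => U (Y ω)) μ) :
    ∃! η : ℝ, 0 < η ∧
      U η = (∫ ω, U (Y ω) ∂μ) - β * ∫ ω, max (U (δ * η) - U (Y ω)) 0 ∂μ := by
  have hμne : μ ≠ 0 := IsProbabilityMeasure.ne_zero μ
  have : (ae μ).NeBot := ae_neBot.2 hμne
  set c : ℝ := ∫ ω, U (Y ω) ∂μ with hc
  -- integrability of the positive part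
  have hint : ∀ t : ℝ, Integrable (fun ω => max (t - U (Y ω)) 0) μ := by
    intro t
    have := ((integrable_const t).sub hInt).pos_part
    simpa [max_def] using this
  set h : ℝ → ℝ := fun t => ∫ ω, max (t - U (Y ω)) 0 ∂μ with hh
  have hnonneg : ∀ t, 0 ≤ h t := fun t =>
    integral_nonneg fun ω => le_max_right _ _
  have hmono : Monotone h := by
    intro s t hst
    exact integral_mono (hint s) (hint t) fun ω =>
      max_le_max (by linarith) le_rfl
  have hlip : LipschitzWith 1 h := by
    apply LipschitzWith.of_dist_le_mul
    intro t s
    rw [Real.dist_eq, Real.dist_eq, NNReal.coe_one, one_mul]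
    have hsub : h t - h s
        = ∫ ω, (max (t - U (Y ω)) 0 - max (s - U (Y ω)) 0) ∂μ :=
      (integral_sub (hint t) (hint s)).symm
    rw [hsub]
    calc |∫ ω, (max (t - U (Y ω)) 0 - max (s - U (Y ω)) 0) ∂μ|
        ≤ ∫ ω, |max (t - U (Y ω)) 0 - max (s - U (Y ω)) 0| ∂μ := by
          simpa [Real.norm_eq_abs] using
            norm_integral_le_integral_norm
              (fun ω => max (t - U (Y ω)) 0 - max (s - U (Y ω)) 0) (μ := μ)
      _ ≤ ∫ _ω, |t - s| ∂μ := by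
          apply integral_mono ((hint t).sub (hint s)).abs (integrable_const _)
          intro ω
          have := abs_max_sub_max_le_abs (t - U (Y ω)) (s - U (Y ω)) 0
          simpa [max_def] using this
      _ = |t - s| := by simp
  set f : ℝ → ℝ := fun η => U η - c + β * h (U (δ * η)) with hf
  -- continuity of f on Ioi 0
  have hmaps : ∀ x ∈ Set.Ioi (0:ℝ), δ * x ∈ Set.Ioi (0:ℝ) := fun x hx =>
    mul_pos hδ hx
  have hUδ : ContinuousOn (fun η => U (δ * η)) (Set.Ioi 0) :=
    hUc.comp ((continuous_const.mul continuous_id).continuousOn) hmaps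
  have fcont : ContinuousOn f (Set.Ioi 0) := by
    apply ContinuousOn.add (hUc.sub continuousOn_const)
    exact continuousOn_const.mul (hlip.continuous.comp_continuousOn hUδ)
  -- strict monotonicity of f on Ioi 0
  have fmono : StrictMonoOn f (Set.Ioi 0) := by
    intro x hx y hy hxy
    have h1 : U x < U y := hUm (Set.mem_Ioi.mpr hx) (Set.mem_Ioi.mpr hy) hxy
    have h2 : h (U (δ * x)) ≤ h (U (δ * y)) := by
      apply hmono
      exact (hUm.monotoneOn (hmaps x hx) (hmaps y hy)
        (mul_le_mul_of_nonneg_left hxy.le hδ.le))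
    have := mul_le_mul_of_nonneg_left h2 hβ
    simp only [hf]
    linarith
  -- existence of b with c < U b
  have hb : ∃ b : ℝ, 0 < b ∧ c < U b := by
    by_contra hcon
    push_neg at hcon
    have hle : ∀ x : ℝ, 0 < x → U x ≤ c := fun x hx => hcon x hx
    have h0 : ∫ ω, (c - U (Y ω)) ∂μ = 0 := by
      rw [integral_sub (integrable_const c) hInt]
      simp [hc]
    have hae := (integral_eq_zero_iff_of_nonneg
      (fun ω => sub_nonneg.2 (hle _ (hYpos ω)))
      ((integrable_const c).sub hInt)).mp h0
    obtain ⟨ω₀, hω₀⟩ := hae.exists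
    have hY0 : U (Y ω₀) = c := by
      have : c - U (Y ω₀) = 0 := hω₀
      linarith
    have hlt : U (Y ω₀) < U (Y ω₀ + 1) :=
      hUm (Set.mem_Ioi.mpr (hYpos ω₀))
        (Set.mem_Ioi.mpr (by linarith [hYpos ω₀])) (by linarith)
    have hle2 := hle (Y ω₀ + 1) (by linarith [hYpos ω₀])
    linarith
  obtain ⟨b, hbpos, hbc⟩ := hb
  have hfb : 0 < f b := by
    have := mul_nonneg hβ (hnonneg (U (δ * b)))
    simp only [hf]; linarith
  -- existence of a₀ with U a₀ < c
  have ha0 : ∃ a : ℝ, 0 < a ∧ U a < c := by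
    by_contra hcon
    push_neg at hcon
    have hge : ∀ x : ℝ, 0 < x → c ≤ U x := fun x hx => hcon x hx
    have h0 : ∫ ω, (U (Y ω) - c) ∂μ = 0 := by
      rw [integral_sub hInt (integrable_const c)]
      simp [hc]
    have hae := (integral_eq_zero_iff_of_nonneg
      (fun ω => sub_nonneg.2 (hge _ (hYpos ω)))
      (hInt.sub (integrable_const c))).mp h0
    obtain ⟨ω₀, hω₀⟩ := hae.exists
    have hY0 : U (Y ω₀) = c := by
      have : U (Y ω₀) - c = 0 := hω₀
      linarith
    have hhalf : (0:ℝ) < Y ω₀ / 2 := by linarith [hYpos ω₀]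
    have hlt : U (Y ω₀ / 2) < U (Y ω₀) :=
      hUm (Set.mem_Ioi.mpr hhalf) (Set.mem_Ioi.mpr (hYpos ω₀))
        (by linarith [hYpos ω₀])
    have hge2 := hge (Y ω₀ / 2) hhalf
    linarith
  obtain ⟨a₀, ha0pos, ha0c⟩ := ha0
  -- the sequence a₀ / (n+1) and dominated convergence
  set s : ℕ → ℝ := fun n => a₀ / (n + 1) with hs
  have hspos : ∀ n, 0 < s n := fun n =>
    div_pos ha0pos (by positivity)
  have hsle : ∀ n, s n ≤ a₀ := by
    intro n
    rw [hs]
    rw [div_le_iff₀ (by positivity : (0:ℝ) < (n:ℝ) + 1)]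
    nlinarith [Nat.cast_nonneg (α := ℝ) n]
  have hUsle : ∀ n, U (δ * s n) ≤ U (δ * a₀) := fun n =>
    hUm.monotoneOn (hmaps _ (hspos n)) (hmaps _ ha0pos)
      (mul_le_mul_of_nonneg_left (hsle n) hδ.le)
  have htend : Filter.Tendsto (fun n => h (U (δ * s n)))
      Filter.atTop (nhds 0) := by
    have h0 : (0:ℝ) = ∫ _ω, (0:ℝ) ∂μ := by simp
    rw [h0]
    apply tendsto_integral_of_dominated_convergence
      (bound := fun ω => max (U (δ * a₀) - U (Y ω)) 0)
      (F := fun n ω => max (U (δ * s n) - U (Y ω)) 0)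
    · intro n; exact (hint _).1
    · exact hint _
    · intro n
      filter_upwards with ω
      rw [Real.norm_eq_abs, abs_of_nonneg (le_max_right _ _)]
      exact max_le_max (by linarith [hUsle n]) le_rfl
    · filter_upwards with ω
      have hev : ∀ᶠ n in Filter.atTop,
          max (U (δ * s n) - U (Y ω)) 0 = 0 := by
        obtain ⟨N, hN⟩ := exists_nat_ge (δ * a₀ / Y ω)
        filter_upwards [Filter.eventually_ge_atTop N] with n hn
        have hYω := hYpos ω
        have hδs : δ * s n ≤ Y ω := by
          have h1 : δ * a₀ / Y ω ≤ (n:ℝ) + 1 := by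
            have : (N:ℝ) ≤ n := Nat.cast_le.2 hn
            linarith
          have h2 : δ * a₀ ≤ ((n:ℝ) + 1) * Y ω := by
            rw [div_le_iff₀ hYω] at h1; linarith
          rw [hs]
          rw [mul_div_assoc', div_le_iff₀ (by positivity : (0:ℝ) < (n:ℝ) + 1)]
          linarith
        have : U (δ * s n) ≤ U (Y ω) :=
          hUm.monotoneOn (hmaps _ (hspos n)) (Set.mem_Ioi.mpr (hYpos ω)) hδs
        exact max_eq_right (by linarith)
      exact Filter.Tendsto.congr' (hev.mono fun n hn => hn.symm)
        tendsto_const_nhds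
  -- choose n with β * h (U (δ * s n)) < c - U a₀
  have htendβ : Filter.Tendsto (fun n => β * h (U (δ * s n)))
      Filter.atTop (nhds 0) := by
    simpa using htend.const_mul β
  have hev : ∀ᶠ n in Filter.atTop,
      β * h (U (δ * s n)) < c - U a₀ :=
    htendβ.eventually_lt_const (by linarith)
  obtain ⟨n, hn⟩ := hev.exists
  set a : ℝ := s n with ha
  have hapos : 0 < a := hspos n
  have hfa : f a < 0 := by
    have hUa : U a ≤ U a₀ :=
      hUm.monotoneOn (Set.mem_Ioi.mpr hapos) (Set.mem_Ioi.mpr ha0pos) (hsle n)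
    simp only [hf]
    linarith
  -- a < b
  have hab : a < b :=
    (fmono.lt_iff_lt (Set.mem_Ioi.mpr hapos) (Set.mem_Ioi.mpr hbpos)).1 (by linarith)
  -- intermediate value theorem
  have hsub : Set.Icc a b ⊆ Set.Ioi (0:ℝ) := fun x hx =>
    lt_of_lt_of_le hapos hx.1
  have h0mem : (0:ℝ) ∈ Set.Icc (f a) (f b) := ⟨hfa.le, hfb.le⟩
  obtain ⟨η, hηmem, hη0⟩ :=
    intermediate_value_Icc hab.le (fcont.mono hsub) h0mem
  have hηpos : 0 < η := lt_of_lt_of_le hapos hηmem.1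
  refine ⟨η, ⟨hηpos, ?_⟩, ?_⟩
  · have : f η = 0 := hη0
    simp only [hf] at this
    linarith
  · rintro η' ⟨hη'pos, hη'eq⟩
    have hfη' : f η' = 0 := by
      simp only [hf]
      linarith
    have hfη : f η = 0 := hη0
    exact fmono.injOn (Set.mem_Ioi.mpr hη'pos) (Set.mem_Ioi.mpr hηpos) (by rw [hfη', hfη])
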